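/- (Cycle Lemma for ±1 sequences, k=1) Given a sequence a_1,…,a_{2n+1} with each a_i ∈ {−1,1} and Σ a_i = 1, there is exactly one cyclic shift of the sequence all of whose nonempty partial sums are positive. -/

import Mathlib

/-- **Cycle Lemma for ±1 sequences, k = 1**: given a_1,…,a_{2n+1} ∈ {−1,1} with
total sum 1, exactly one cyclic shift has all its nonempty partial sums positive. -/
theorem cycle_lemma_pm_one (n : ℕ) (a : ℕ → ℤ)
    (hval : ∀ i < 2 * n + 1, a i = 1 ∨ a i = -1)
    (hsum : ∑ i ∈ Finset.range (2 * n + 1), a i = 1) :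
    ∃! j : ℕ, j < 2 * n + 1 ∧
      ∀ p, 1 ≤ p → p ≤ 2 * n + 1 →
        0 < ∑ i ∈ Finset.range p, a ((i + j) % (2 * n + 1)) := by
  set N := 2 * n + 1 with hN
  have hNpos : 0 < N := by omega
  set F : ℕ → ℤ := fun m => ∑ i ∈ Finset.range m, a (i % N) with hF
  have hF0 : F N = 1 := by
    rw [hF]
    simp only
    rw [← hsum]
    exact Finset.sum_congr rfl (fun i hi => by
      rw [Nat.mod_eq_of_lt (Finset.mem_range.mp hi)])
  have hsucc : ∀ m, F (m + 1) = F m + a (m % N) := fun m => Finset.sum_range_succ _ m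
  have hper : ∀ m, F (m + N) = F m + 1 := by
    intro m
    induction m with
    | zero => simpa [hF] using hF0
    | succ k ih =>
      have h1 : k + 1 + N = (k + N) + 1 := by omega
      rw [h1, hsucc, ih, hsucc]
      have h2 : (k + N) % N = k % N := Nat.add_mod_right k N
      rw [h2]; ring
  have hshift : ∀ j p, ∑ i ∈ Finset.range p, a ((i + j) % N) = F (j + p) - F j := by
    intro j p
    induction p with
    | zero => simp
    | succ q ih =>
      rw [Finset.sum_range_succ, ih, ← Nat.add_assoc, hsucc]
      have h3 : q + j = j + q := Nat.add_comm q j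
      rw [h3]; ring
  obtain ⟨j0, hj0mem, hj0min⟩ := Finset.exists_min_image (Finset.range N) F
    ⟨0, Finset.mem_range.mpr hNpos⟩
  set s := (Finset.range N).filter (fun m => F m ≤ F j0) with hs
  have hsne : s.Nonempty := ⟨j0, Finset.mem_filter.mpr ⟨hj0mem, le_refl _⟩⟩
  set j := s.max' hsne with hj
  have hjmem := s.max'_mem hsne
  have hjlt : j < N := Finset.mem_range.mp (Finset.mem_filter.mp hjmem).1
  have hjval : F j ≤ F j0 := (Finset.mem_filter.mp hjmem).2
  have hjmin : ∀ m, m < N → F j ≤ F m := fun m hm =>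
    hjval.trans (hj0min m (Finset.mem_range.mpr hm))
  have hgood : ∀ p, 1 ≤ p → p ≤ N → 0 < ∑ i ∈ Finset.range p, a ((i + j) % N) := by
    intro p hp1 hpN
    rw [hshift]
    by_cases h : j + p < N
    · have hle := hjmin (j + p) h
      rcases lt_or_eq_of_le hle with h' | h'
      · linarith
      · exfalso
        have hmem : j + p ∈ s := Finset.mem_filter.mpr
          ⟨Finset.mem_range.mpr h, h'.ge.trans hjval⟩
        have := s.le_max' (j + p) hmem
        omega
    · have heq : j + p = (j + p - N) + N := by omega
      rw [heq, hper]
      have := hjmin (j + p - N) (by omega)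
      linarith
  have key : ∀ x y : ℕ, y < N → x < y →
      (∀ p, 1 ≤ p → p ≤ N → 0 < ∑ i ∈ Finset.range p, a ((i + x) % N)) →
      (∀ p, 1 ≤ p → p ≤ N → 0 < ∑ i ∈ Finset.range p, a ((i + y) % N)) → False := by
    intro x y hy hxy h1 h2
    have e1 := h1 (y - x) (by omega) (by omega)
    rw [hshift] at e1
    have hx1 : x + (y - x) = y := by omega
    rw [hx1] at e1
    have e2 := h2 (x + N - y) (by omega) (by omega)
    rw [hshift] at e2
    have hy2 : y + (x + N - y) = x + N := by omega
    rw [hy2, hper] at e2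
    omega
  refine ⟨j, ⟨hjlt, hgood⟩, ?_⟩
  rintro j' ⟨hj'lt, hgood'⟩
  rcases lt_trichotomy j' j with h | h | h
  · exact absurd (key j' j hjlt h hgood' hgood) id
  · exact h
  · exact absurd (key j j' hj'lt h hgood hgood') id
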